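/- arXiv:1906.03536 — 3 statements merged into one kernel-verified Lean document; each statement's English description precedes it below -/
import Mathlib

section
/- Define f(λ) = Ti₂(λ) − ln(λ)·arctan(λ) for λ > 0, where Ti₂ is the inverse tangent integral. Then f is strictly increasing on (0,1), strictly decreasing on (1,∞), satisfies f(λ) = f(1/λ) for all λ > 0, and 0 < f(λ) ≤ f(1) = Ti₂(1) < 1. -/
open Real Set MeasureTheory

noncomputable def Ti2 (x : ℝ) : ℝ := ∫ t in (0:ℝ)..x, Real.arctan t / t

lemma arctan_nonneg' {x : ℝ} (hx : 0 ≤ x) : 0 ≤ Real.arctan x := by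
  simpa using Real.arctan_strictMono.monotone hx

lemma arctan_le_poly {x : ℝ} (hx : 0 ≤ x) :
    Real.arctan x ≤ x - x^3/3 + x^5/5 := by
  have h : ∀ y : ℝ, HasDerivAt (fun t => t - t^3/3 + t^5/5 - Real.arctan t)
      (1 - y^2 + y^4 - 1/(1+y^2)) y := by
    intro y
    have h1 : HasDerivAt (fun t : ℝ => t - t^3/3 + t^5/5 - Real.arctan t)
        (1 - (3*y^2)/3 + (5*y^4)/5 - 1/(1+y^2)) y := by
      exact (((hasDerivAt_id y).sub ((hasDerivAt_pow 3 y).div_const 3)).add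
        ((hasDerivAt_pow 5 y).div_const 5)).sub (Real.hasDerivAt_arctan y)
    convert h1 using 1; ring
  have hmono : MonotoneOn (fun t => t - t^3/3 + t^5/5 - Real.arctan t) (Ici 0) := by
    apply monotoneOn_of_deriv_nonneg (convex_Ici 0)
    · exact ((((continuous_id.sub ((continuous_pow 3).div_const 3)).add
        ((continuous_pow 5).div_const 5)).sub Real.continuous_arctan)).continuousOn
    · intro y _; exact (h y).differentiableAt.differentiableWithinAt
    · intro y _
      rw [(h y).deriv]
      have hy2 : (0:ℝ) < 1 + y^2 := by positivity
      have heq : 1 - y^2 + y^4 - 1/(1+y^2) = y^6/(1+y^2) := by field_simp; ring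
      rw [heq]; positivity
  have := hmono (self_mem_Ici) hx hx
  simp only [Real.arctan_zero] at this
  norm_num at this
  linarith

lemma arctan_le_self' {x : ℝ} (hx : 0 ≤ x) : Real.arctan x ≤ x := by
  have h : ∀ y : ℝ, HasDerivAt (fun t => t - Real.arctan t) (1 - 1/(1+y^2)) y := fun y =>
    (hasDerivAt_id y).sub (Real.hasDerivAt_arctan y)
  have hmono : MonotoneOn (fun t => t - Real.arctan t) (Ici 0) := by
    apply monotoneOn_of_deriv_nonneg (convex_Ici 0)
    · exact (continuous_id.sub Real.continuous_arctan).continuousOn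
    · intro y _; exact (h y).differentiableAt.differentiableWithinAt
    · intro y _
      rw [(h y).deriv]
      have hy2 : (0:ℝ) < 1 + y^2 := by positivity
      have : 1/(1+y^2) ≤ 1 := by
        rw [div_le_one hy2]; nlinarith
      linarith
  have := hmono (self_mem_Ici) hx hx
  simp only [Real.arctan_zero] at this
  linarith

lemma abs_integrand_le (t : ℝ) : |Real.arctan t / t| ≤ 1 := by
  rcases eq_or_ne t 0 with rfl | ht
  · simp
  · rw [abs_div, div_le_one (abs_pos.mpr ht)]
    rcases le_or_gt 0 t with h | h
    · rw [abs_of_nonneg h, abs_of_nonneg (arctan_nonneg' h)]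
      exact arctan_le_self' h
    · rw [abs_of_neg h, ← abs_neg (Real.arctan t), ← Real.arctan_neg,
        abs_of_nonneg (arctan_nonneg' (by linarith))]
      exact arctan_le_self' (by linarith)

lemma intInt (a b : ℝ) : IntervalIntegrable (fun t => Real.arctan t / t) volume a b := by
  apply IntervalIntegrable.mono_fun' (g := fun _ => (1:ℝ)) intervalIntegrable_const
  · exact (Real.measurable_arctan.div measurable_id).aestronglyMeasurable
  · filter_upwards with t
    rw [Real.norm_eq_abs]
    exact abs_integrand_le t

lemma Ti2_hasDerivAt {x : ℝ} (hx : x ≠ 0) :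
    HasDerivAt Ti2 (Real.arctan x / x) x := by
  apply intervalIntegral.integral_hasDerivAt_right (intInt 0 x)
  · exact (Real.measurable_arctan.div measurable_id).stronglyMeasurable.stronglyMeasurableAtFilter
  · exact Real.continuous_arctan.continuousAt.div continuousAt_id hx

lemma f_hasDerivAt {x : ℝ} (hx : 0 < x) :
    HasDerivAt (fun l : ℝ => Ti2 l - Real.log l * Real.arctan l)
      (-Real.log x / (1 + x^2)) x := by
  have h2 : HasDerivAt (fun l : ℝ => Real.log l * Real.arctan l)
      (x⁻¹ * Real.arctan x + Real.log x * (1/(1+x^2))) x :=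
    (Real.hasDerivAt_log hx.ne').mul (Real.hasDerivAt_arctan x)
  have h := (Ti2_hasDerivAt hx.ne').sub h2
  refine h.congr_deriv ?_
  have hx2 : (0:ℝ) < 1 + x^2 := by positivity
  field_simp
  ring

lemma f_contOn : ContinuousOn (fun l : ℝ => Ti2 l - Real.log l * Real.arctan l) (Ioi 0) :=
  fun x hx => (f_hasDerivAt hx).differentiableAt.continuousAt.continuousWithinAt

lemma f_mono : StrictMonoOn (fun l : ℝ => Ti2 l - Real.log l * Real.arctan l) (Ioc 0 1) := by
  apply strictMonoOn_of_deriv_pos (convex_Ioc 0 1)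
    (f_contOn.mono (fun x hx => hx.1))
  intro x hx
  rw [interior_Ioc] at hx
  rw [(f_hasDerivAt hx.1).deriv]
  have h1 : Real.log x < 0 := Real.log_neg hx.1 hx.2
  have h2 : (0:ℝ) < 1 + x^2 := by positivity
  exact div_pos (by linarith) h2

lemma f_anti : StrictAntiOn (fun l : ℝ => Ti2 l - Real.log l * Real.arctan l) (Ici 1) := by
  apply strictAntiOn_of_deriv_neg (convex_Ici 1)
    (f_contOn.mono (fun x hx => (lt_of_lt_of_le one_pos hx : 0 < x)))
  intro x hx
  rw [interior_Ici] at hx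
  rw [(f_hasDerivAt (lt_trans one_pos hx)).deriv]
  have h1 : 0 < Real.log x := Real.log_pos hx
  have h2 : (0:ℝ) < 1 + x^2 := by positivity
  rw [neg_div, neg_lt_zero]
  positivity

lemma f_symm : ∀ l : ℝ, 0 < l →
    Ti2 l - Real.log l * Real.arctan l = Ti2 (1/l) - Real.log (1/l) * Real.arctan (1/l) := by
  set f : ℝ → ℝ := fun l => Ti2 l - Real.log l * Real.arctan l with hf
  have hF : ∀ x : ℝ, 0 < x → HasDerivAt (fun l => f l - f (1/l)) 0 x := by
    intro x hx
    have h1 := f_hasDerivAt hx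
    have hinv : HasDerivAt (fun l : ℝ => 1/l) (-(1/x^2)) x := by
      simpa using (hasDerivAt_inv hx.ne')
    have h2 : HasDerivAt (fun l : ℝ => f (1/l))
        (-Real.log (1/x) / (1 + (1/x)^2) * (-(1/x^2))) x :=
      (f_hasDerivAt (by positivity : (0:ℝ) < 1/x)).comp x hinv
    have h := h1.sub h2
    refine h.congr_deriv ?_
    rw [Real.log_div one_ne_zero hx.ne', Real.log_one]
    have hx2 : (0:ℝ) < 1 + x^2 := by positivity
    field_simp
    ring
  have hmono : MonotoneOn (fun l => f l - f (1/l)) (Ioi 0) := by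
    apply monotoneOn_of_deriv_nonneg (convex_Ioi 0)
    · exact fun x hx => (hF x hx).differentiableAt.continuousAt.continuousWithinAt
    · intro x hx; rw [interior_Ioi] at hx
      exact (hF x hx).differentiableAt.differentiableWithinAt
    · intro x hx; rw [interior_Ioi] at hx
      rw [(hF x hx).deriv]
  have hanti : AntitoneOn (fun l => f l - f (1/l)) (Ioi 0) := by
    apply antitoneOn_of_deriv_nonpos (convex_Ioi 0)
    · exact fun x hx => (hF x hx).differentiableAt.continuousAt.continuousWithinAt
    · intro x hx; rw [interior_Ioi] at hx
      exact (hF x hx).differentiableAt.differentiableWithinAt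
    · intro x hx; rw [interior_Ioi] at hx
      rw [(hF x hx).deriv]
  intro l hl
  have h1 : (1:ℝ) ∈ Ioi (0:ℝ) := by norm_num
  have hl' : l ∈ Ioi (0:ℝ) := hl
  have e1 : f 1 - f (1/1) = 0 := by norm_num
  have : f l - f (1/l) = 0 := by
    rcases le_total l 1 with h | h
    · have a := hmono hl' h1 h
      have b := hanti hl' h1 h
      simp only at a b e1 ⊢; linarith
    · have a := hmono h1 hl' h
      have b := hanti h1 hl' h
      simp only at a b e1 ⊢; linarith
  linarith [this]

lemma Ti2_pos {l : ℝ} (hl : 0 < l) : 0 < Ti2 l := by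
  apply intervalIntegral.intervalIntegral_pos_of_pos_on (intInt 0 l) _ hl
  intro x hx
  exact div_pos (by simpa using Real.arctan_strictMono hx.1) hx.1

lemma Ti2_one_lt : Ti2 1 < 1 := by
  have key : Ti2 1 ≤ ∫ t in (0:ℝ)..1, (1 - t^2/3 + t^4/5) := by
    apply intervalIntegral.integral_mono_on one_pos.le (intInt 0 1)
    · apply Continuous.intervalIntegrable; continuity
    · intro t ht
      rcases eq_or_lt_of_le ht.1 with rfl | ht0
      · simp
      · rw [div_le_iff₀ ht0]
        have := arctan_le_poly ht0.le
        nlinarith [ht.2, sq_nonneg t, pow_nonneg ht0.le 4]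
  have comp : ∫ t in (0:ℝ)..1, (1 - t^2/3 + t^4/5) = 1 - 1/9 + 1/25 := by
    have : ∀ t : ℝ, HasDerivAt (fun u : ℝ => u - u^3/9 + u^5/25) (1 - t^2/3 + t^4/5) t := by
      intro t
      have h1 : HasDerivAt (fun u : ℝ => u - u^3/9 + u^5/25)
          (1 - (3*t^2)/9 + (5*t^4)/25) t :=
        ((hasDerivAt_id t).sub ((hasDerivAt_pow 3 t).div_const 9)).add
          ((hasDerivAt_pow 5 t).div_const 25)
      convert h1 using 1; ring
    rw [intervalIntegral.integral_eq_sub_of_hasDerivAt (fun t _ => this t)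
      (by apply Continuous.intervalIntegrable; continuity)]
    norm_num
  rw [comp] at key
  linarith

theorem Ti2_log_arctan_properties :
    StrictMonoOn (fun l : ℝ => Ti2 l - Real.log l * Real.arctan l) (Ioo 0 1) ∧
    StrictAntiOn (fun l : ℝ => Ti2 l - Real.log l * Real.arctan l) (Ioi 1) ∧
    (∀ l : ℝ, 0 < l →
      Ti2 l - Real.log l * Real.arctan l = Ti2 (1/l) - Real.log (1/l) * Real.arctan (1/l)) ∧
    (∀ l : ℝ, 0 < l →
      0 < Ti2 l - Real.log l * Real.arctan l ∧
      Ti2 l - Real.log l * Real.arctan l ≤ Ti2 1 - Real.log 1 * Real.arctan 1) ∧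
    Ti2 1 - Real.log 1 * Real.arctan 1 = Ti2 1 ∧ Ti2 1 < 1 := by
  have hpos : ∀ l : ℝ, 0 < l → l ≤ 1 → 0 < Ti2 l - Real.log l * Real.arctan l := by
    intro l hl hl1
    have h1 : Real.log l ≤ 0 := Real.log_nonpos hl.le hl1
    have h2 : 0 ≤ Real.arctan l := arctan_nonneg' hl.le
    nlinarith [Ti2_pos hl]
  have hle : ∀ l : ℝ, 0 < l →
      Ti2 l - Real.log l * Real.arctan l ≤ Ti2 1 - Real.log 1 * Real.arctan 1 := by
    intro l hl
    rcases lt_trichotomy l 1 with h | rfl | h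
    · exact (f_mono ⟨hl, h.le⟩ ⟨one_pos, le_refl 1⟩ h).le
    · exact le_refl _
    · exact (f_anti self_mem_Ici h.le h).le
  refine ⟨f_mono.mono (fun x hx => ⟨hx.1, hx.2.le⟩),
    f_anti.mono (fun x hx => (le_of_lt hx : 1 ≤ x)), f_symm, ?_, by simp, Ti2_one_lt⟩
  intro l hl
  refine ⟨?_, hle l hl⟩
  rcases le_or_gt l 1 with h | h
  · exact hpos l hl h
  · rw [f_symm l hl]
    exact hpos (1/l) (by positivity) (by rw [div_le_one hl]; linarith)
end

section
/- The function ν ↦ arctan²(√ν) is strictly increasing and strictly concave on (0,∞), and satisfies arctan²(√ν) ≤ min(ln(1+ν), π²/4) for all ν > 0. -/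
open Real Set

private lemma my_arctan_lt_self {x : ℝ} (hx : 0 < x) : Real.arctan x < x := by
  have h : StrictMonoOn (fun x : ℝ => x - Real.arctan x) (Ici 0) := by
    apply strictMonoOn_of_deriv_pos (convex_Ici 0)
    · exact (continuous_id.sub Real.continuous_arctan).continuousOn
    · intro y hy
      rw [interior_Ici] at hy
      have hd : HasDerivAt (fun x : ℝ => x - Real.arctan x) (1 - 1 / (1 + y ^ 2)) y :=
        (hasDerivAt_id y).sub (Real.hasDerivAt_arctan y)
      rw [hd.deriv]
      have h1 : (0:ℝ) < 1 + y ^ 2 := by positivity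
      rw [sub_pos, div_lt_one h1]
      have hy' : 0 < y := hy
      nlinarith [hy']
  have := h (self_mem_Ici) (mem_Ici.2 hx.le) hx
  simpa using this

private lemma my_div_lt_arctan {x : ℝ} (hx : 0 < x) : x / (1 + x ^ 2) < Real.arctan x := by
  have h : StrictMonoOn (fun x : ℝ => Real.arctan x - x / (1 + x ^ 2)) (Ici 0) := by
    apply strictMonoOn_of_deriv_pos (convex_Ici 0)
    · apply ContinuousOn.sub Real.continuous_arctan.continuousOn
      apply ContinuousOn.div continuous_id.continuousOn (by fun_prop)
      intro y _; positivity
    · intro y hy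
      rw [interior_Ici] at hy
      have h1 : (0:ℝ) < 1 + y ^ 2 := by positivity
      have hq : HasDerivAt (fun x : ℝ => x / (1 + x ^ 2))
          ((1 * (1 + y ^ 2) - y * (2 * y)) / (1 + y ^ 2) ^ 2) y := by
        have : HasDerivAt (fun x : ℝ => 1 + x ^ 2) (2 * y) y := by
          simpa using (hasDerivAt_pow 2 y).const_add 1
        exact (hasDerivAt_id y).div this h1.ne'
      have hd : HasDerivAt (fun x : ℝ => Real.arctan x - x / (1 + x ^ 2))
          (1 / (1 + y ^ 2) - (1 * (1 + y ^ 2) - y * (2 * y)) / (1 + y ^ 2) ^ 2) y :=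
        (Real.hasDerivAt_arctan y).sub hq
      rw [hd.deriv]
      have hy' : 0 < y := hy
      have he : 1 / (1 + y ^ 2) - (1 * (1 + y ^ 2) - y * (2 * y)) / (1 + y ^ 2) ^ 2
          = 2 * y ^ 2 / (1 + y ^ 2) ^ 2 := by
        field_simp
        ring
      rw [he]
      positivity
  have := h self_mem_Ici (mem_Ici.2 hx.le) hx
  simpa using this

private lemma my_anti : StrictAntiOn (fun x : ℝ => Real.arctan x / x) (Ioi 0) := by
  apply strictAntiOn_of_deriv_neg (convex_Ioi 0)
  · exact ContinuousOn.div Real.continuous_arctan.continuousOn continuous_id.continuousOn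
      fun y hy => ne_of_gt hy
  · intro y hy
    rw [interior_Ioi] at hy
    have hd : HasDerivAt (fun x : ℝ => Real.arctan x / x)
        ((1 / (1 + y ^ 2) * y - Real.arctan y * 1) / y ^ 2) y :=
      (Real.hasDerivAt_arctan y).div (hasDerivAt_id y) hy.ne'
    have hy' : 0 < y := hy
    rw [hd.deriv]
    apply div_neg_of_neg_of_pos _ (by positivity)
    have := my_div_lt_arctan hy'
    have h1 : (0:ℝ) < 1 + y ^ 2 := by positivity
    rw [sub_neg, mul_one]
    calc 1 / (1 + y ^ 2) * y = y / (1 + y ^ 2) := by ring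
    _ < Real.arctan y := this

private lemma hasDerivAt_h {v : ℝ} (hv : 0 < v) :
    HasDerivAt (fun v : ℝ => (Real.arctan (Real.sqrt v)) ^ 2)
      (Real.arctan (Real.sqrt v) / (Real.sqrt v * (1 + v))) v := by
  have hs : 0 < Real.sqrt v := Real.sqrt_pos.2 hv
  have hsq : Real.sqrt v ^ 2 = v := Real.sq_sqrt hv.le
  have h1 : HasDerivAt Real.sqrt (1 / (2 * Real.sqrt v)) v := Real.hasDerivAt_sqrt hv.ne'
  have h2 : HasDerivAt (fun v : ℝ => Real.arctan (Real.sqrt v))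
      (1 / (1 + Real.sqrt v ^ 2) * (1 / (2 * Real.sqrt v))) v :=
    (Real.hasDerivAt_arctan (Real.sqrt v)).comp v h1
  have h3 : HasDerivAt (fun v : ℝ => Real.arctan (Real.sqrt v) ^ 2)
      (((2:ℕ):ℝ) * Real.arctan (Real.sqrt v) ^ (2 - 1) * (1 / (1 + Real.sqrt v ^ 2) * (1 / (2 * Real.sqrt v)))) v := h2.pow 2
  convert h3 using 1
  rw [hsq]
  field_simp
  ring

private lemma deriv_h {v : ℝ} (hv : 0 < v) :
    deriv (fun v : ℝ => (Real.arctan (Real.sqrt v)) ^ 2) v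
      = Real.arctan (Real.sqrt v) / (Real.sqrt v * (1 + v)) := (hasDerivAt_h hv).deriv

private lemma deriv_h_anti :
    StrictAntiOn (deriv (fun v : ℝ => (Real.arctan (Real.sqrt v)) ^ 2)) (Ioi 0) := by
  intro a ha b hb hab
  rw [mem_Ioi] at ha hb
  rw [deriv_h ha, deriv_h hb]
  have hsa : 0 < Real.sqrt a := Real.sqrt_pos.2 ha
  have hsb : 0 < Real.sqrt b := Real.sqrt_pos.2 hb
  have hss : Real.sqrt a < Real.sqrt b := Real.sqrt_lt_sqrt ha.le hab
  have key : Real.arctan (Real.sqrt b) / Real.sqrt b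
      < Real.arctan (Real.sqrt a) / Real.sqrt a := my_anti hsa hsb hss
  have hpos : 0 < Real.arctan (Real.sqrt b) / Real.sqrt b :=
    div_pos (by simpa using Real.arctan_strictMono hsb) hsb
  have e1 : ∀ x : ℝ, Real.arctan (Real.sqrt x) / (Real.sqrt x * (1 + x))
      = (Real.arctan (Real.sqrt x) / Real.sqrt x) / (1 + x) := fun x => by
    rw [div_div]
  rw [e1, e1]
  have h1a : (0:ℝ) < 1 + a := by linarith
  calc Real.arctan (Real.sqrt b) / Real.sqrt b / (1 + b)
      ≤ Real.arctan (Real.sqrt b) / Real.sqrt b / (1 + a) := by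
        apply div_le_div_of_nonneg_left hpos.le h1a (by linarith)
    _ < Real.arctan (Real.sqrt a) / Real.sqrt a / (1 + a) :=
        div_lt_div_of_pos_right key h1a

private lemma log_bound {x : ℝ} (hx : 0 ≤ x) :
    Real.arctan x ^ 2 ≤ Real.log (1 + x ^ 2) := by
  have h : MonotoneOn (fun x : ℝ => Real.log (1 + x ^ 2) - Real.arctan x ^ 2) (Ici 0) := by
    apply monotoneOn_of_deriv_nonneg (convex_Ici 0)
    · apply ContinuousOn.sub
      · apply ContinuousOn.log (by fun_prop)
        intro y _; positivity
      · exact (Real.continuous_arctan.pow 2).continuousOn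
    · apply DifferentiableOn.sub
      · apply DifferentiableOn.log (by fun_prop)
        intro y _; positivity
      · exact ((Real.differentiable_arctan.differentiableOn).pow 2)
    · intro y hy
      rw [interior_Ici] at hy
      have h1 : (0:ℝ) < 1 + y ^ 2 := by positivity
      have hl : HasDerivAt (fun x : ℝ => Real.log (1 + x ^ 2)) (2 * y / (1 + y ^ 2)) y := by
        have : HasDerivAt (fun x : ℝ => 1 + x ^ 2) (2 * y) y := by
          simpa using (hasDerivAt_pow 2 y).const_add 1
        exact this.log h1.ne'
      have ha : HasDerivAt (fun x : ℝ => Real.arctan x ^ 2)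
          (2 * Real.arctan y ^ 1 * (1 / (1 + y ^ 2))) y := (Real.hasDerivAt_arctan y).pow 2
      have hd : HasDerivAt (fun x : ℝ => Real.log (1 + x ^ 2) - Real.arctan x ^ 2)
          (2 * y / (1 + y ^ 2) - 2 * Real.arctan y ^ 1 * (1 / (1 + y ^ 2))) y := hl.sub ha
      rw [hd.deriv]
      have := my_arctan_lt_self hy
      rw [sub_nonneg, pow_one]
      calc 2 * Real.arctan y * (1 / (1 + y ^ 2)) = 2 * Real.arctan y / (1 + y ^ 2) := by ring
        _ ≤ 2 * y / (1 + y ^ 2) := by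
          gcongr
  have h2 : Real.log (1 + (0:ℝ) ^ 2) - Real.arctan 0 ^ 2
      ≤ Real.log (1 + x ^ 2) - Real.arctan x ^ 2 := h self_mem_Ici (mem_Ici.2 hx) hx
  norm_num [Real.arctan_zero, Real.log_one] at h2
  linarith

theorem arctan_sq_sqrt_properties :
    StrictMonoOn (fun v : ℝ => (Real.arctan (Real.sqrt v))^2) (Ioi 0) ∧
    StrictConcaveOn ℝ (Ioi 0) (fun v : ℝ => (Real.arctan (Real.sqrt v))^2) ∧
    ∀ v : ℝ, 0 < v →
      (Real.arctan (Real.sqrt v))^2 ≤ min (Real.log (1 + v)) (Real.pi^2 / 4) := by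
  refine ⟨?_, ?_, ?_⟩
  · intro a ha b hb hab
    rw [mem_Ioi] at ha hb
    have hss : Real.sqrt a < Real.sqrt b := Real.sqrt_lt_sqrt ha.le hab
    have h1 : Real.arctan (Real.sqrt a) < Real.arctan (Real.sqrt b) :=
      Real.arctan_strictMono hss
    have h2 : 0 ≤ Real.arctan (Real.sqrt a) := by
      simpa using Real.arctan_strictMono.monotone (Real.sqrt_nonneg a)
    exact pow_lt_pow_left₀ h1 h2 two_ne_zero
  · apply StrictAntiOn.strictConcaveOn_of_deriv (convex_Ioi 0)
    · exact ((Real.continuous_arctan.comp Real.continuous_sqrt).pow 2).continuousOn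
    · rw [interior_Ioi]; exact deriv_h_anti
  · intro v hv
    refine le_min ?_ ?_
    · have := log_bound (Real.sqrt_nonneg v)
      rwa [Real.sq_sqrt hv.le] at this
    · have h1 : Real.arctan (Real.sqrt v) < π / 2 := Real.arctan_lt_pi_div_two _
      have h2 : 0 ≤ Real.arctan (Real.sqrt v) := by
        simpa using Real.arctan_strictMono.monotone (Real.sqrt_nonneg v)
      calc Real.arctan (Real.sqrt v) ^ 2 ≤ (π / 2) ^ 2 := by nlinarith
        _ = π ^ 2 / 4 := by ring
end

section
/- For every real ν > 0: −(arctan(iν√i) + arctan(−i√i/ν)) = arctan(ν/√2 − 1/(ν√2)), where arctan on complex arguments is defined via the principal branch and √i = (1+i)/√2. -/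
open Complex

noncomputable def carctan (z : ℂ) : ℂ :=
  (1 / (2 * Complex.I)) * Complex.log ((1 + Complex.I * z) / (1 - Complex.I * z))

noncomputable def sqrtI : ℂ := (1 + Complex.I) / Real.sqrt 2

theorem h_nu_identity (v : ℝ) (hv : 0 < v) :
    -(carctan (Complex.I * v * sqrtI) + carctan (-Complex.I * sqrtI / v))
      = (Real.arctan (v / Real.sqrt 2 - 1 / (v * Real.sqrt 2)) : ℂ) := by
  have hs : (0:ℝ) < Real.sqrt 2 := by positivity
  set s : ℝ := Real.sqrt 2 with hsdef
  have hss : s * s = 2 := Real.mul_self_sqrt (by norm_num)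
  set p : ℝ := v / s with hpdef
  set q : ℝ := 1 / (v * s) with hqdef
  have hp0 : 0 < p := by positivity
  have hq0 : 0 < q := by positivity
  have hpq : 2 * (p * q) = 1 := by
    rw [hpdef, hqdef]; field_simp; linear_combination -1 * hss
  set t : ℝ := p - q with htdef
  -- complex abbreviations
  set n1 : ℂ := 1 - ((p:ℂ) + p * I) with hn1def
  set d1 : ℂ := 1 + ((p:ℂ) + p * I) with hd1def
  set n2 : ℂ := 1 + ((q:ℂ) + q * I) with hn2def
  set d2 : ℂ := 1 - ((q:ℂ) + q * I) with hd2def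
  have hsC : (s:ℂ) ≠ 0 := by exact_mod_cast hs.ne'
  have hvC : (v:ℂ) ≠ 0 := by exact_mod_cast hv.ne'
  have ha : (v:ℂ) * sqrtI = (p:ℂ) + p * I := by
    rw [sqrtI, hpdef]; push_cast; field_simp; ring
  have hb : sqrtI / (v:ℂ) = (q:ℂ) + q * I := by
    rw [sqrtI, hqdef]; push_cast; rw [div_div]; field_simp
    rw [hsdef]
  have e1 : (1:ℂ) + I * (I * ↑v * sqrtI) = n1 := by
    rw [hn1def]; linear_combination (↑v * sqrtI) * Complex.I_sq - ha
  have e2 : (1:ℂ) - I * (I * ↑v * sqrtI) = d1 := by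
    rw [hd1def]; linear_combination -(↑v * sqrtI) * Complex.I_sq + ha
  have e3 : (1:ℂ) + I * (-I * sqrtI / ↑v) = n2 := by
    rw [hn2def]; linear_combination -(sqrtI / ↑v) * Complex.I_sq + hb
  have e4 : (1:ℂ) - I * (-I * sqrtI / ↑v) = d2 := by
    rw [hd2def]; linear_combination (sqrtI / ↑v) * Complex.I_sq - hb
  have hn1 : n1 ≠ 0 := fun h => hp0.ne' (by simpa [hn1def] using congrArg Complex.im h)
  have hd1 : d1 ≠ 0 := fun h => hp0.ne' (by simpa [hd1def] using congrArg Complex.im h)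
  have hn2 : n2 ≠ 0 := fun h => hq0.ne' (by simpa [hn2def] using congrArg Complex.im h)
  have hd2 : d2 ≠ 0 := fun h => hq0.ne' (by simpa [hd2def] using congrArg Complex.im h)
  have hA : n1 / d1 ≠ 0 := div_ne_zero hn1 hd1
  have hB : n2 / d2 ≠ 0 := div_ne_zero hn2 hd2
  -- arg facts
  have himA : (n1 / d1).im < 0 := by
    have h1 : 0 < Complex.normSq d1 := Complex.normSq_pos.mpr hd1
    rw [Complex.div_im, div_sub_div_same, div_neg_iff]
    refine Or.inr ⟨?_, h1⟩
    have hx : n1.im * d1.re - n1.re * d1.im = -(2*p) := by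
      simp [hn1def, hd1def]; ring
    rw [hx]; linarith
  have himB : 0 < (n2 / d2).im := by
    have h1 : 0 < Complex.normSq d2 := Complex.normSq_pos.mpr hd2
    rw [Complex.div_im, div_sub_div_same, div_pos_iff]
    refine Or.inl ⟨?_, h1⟩
    have hx : n2.im * d2.re - n2.re * d2.im = 2*q := by
      simp [hn2def, hd2def]; ring
    rw [hx]; linarith
  have hargA : (n1 / d1).arg < 0 := Complex.arg_neg_iff.mpr himA
  have hargB : 0 ≤ (n2 / d2).arg := Complex.arg_nonneg_iff.mpr himB.le
  have hargAlb : -Real.pi < (n1 / d1).arg := Complex.neg_pi_lt_arg _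
  have hargBub : (n2 / d2).arg ≤ Real.pi := Complex.arg_le_pi _
  have hlogmul : Complex.log ((n1/d1) * (n2/d2))
      = Complex.log (n1/d1) + Complex.log (n2/d2) :=
    Complex.log_mul hA hB ⟨by linarith, by linarith⟩
  have h1t : (1:ℂ) + ↑t*I ≠ 0 := fun h => one_ne_zero (α := ℝ) (by simpa using congrArg Complex.re h)
  have h1mt : (1:ℂ) - ↑t*I ≠ 0 := fun h => one_ne_zero (α := ℝ) (by simpa using congrArg Complex.re h)
  have hpqC : 2 * ((p:ℂ) * (q:ℂ)) = 1 := by exact_mod_cast hpq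
  have htC : (t:ℂ) = (p:ℂ) - (q:ℂ) := by rw [htdef]; push_cast; ring
  have hprod : (n1/d1) * (n2/d2) = (1 - ↑t*I) / (1 + ↑t*I) := by
    rw [div_mul_div_comm, div_eq_div_iff (mul_ne_zero hd1 hd2) h1t, hn1def, hd1def,
      hn2def, hd2def, htC]
    linear_combination (2*((p:ℂ)-(q:ℂ))) * hpqC
      + (-(2*(p:ℂ)*(q:ℂ)*(((p:ℂ)-(q:ℂ)))*(I+2))) * Complex.I_sq
  have hns : 0 < Complex.normSq (1 - (t:ℂ)*I) := Complex.normSq_pos.mpr h1mt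
  have harg : ((1 + (t:ℂ)*I)/(1 - (t:ℂ)*I)).arg ≠ Real.pi := by
    intro h
    rw [Complex.arg_eq_pi_iff] at h
    obtain ⟨h1, h2⟩ := h
    rw [Complex.div_im] at h2
    simp at h2
    have ht0 : t = 0 := by
      rw [div_sub_div_same, div_eq_zero_iff] at h2
      rcases h2 with h2 | h2
      · linarith
      · exact absurd h2 hns.ne'
    rw [ht0] at h1
    norm_num at h1
  have h2I : (1:ℂ)/(2*I) = -I/2 := by
    rw [div_eq_div_iff (mul_ne_zero two_ne_zero I_ne_zero) two_ne_zero]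
    linear_combination (2 : ℂ) * Complex.I_sq
  simp only [carctan]
  rw [e1, e2, e3, e4, ofReal_arctan]
  simp only [Complex.arctan]
  rw [h2I, ← mul_add, ← hlogmul, hprod,
    show ((1:ℂ) - ↑t*I)/(1+↑t*I) = ((1+↑t*I)/(1-↑t*I))⁻¹ from (inv_div _ _).symm,
    Complex.log_inv _ harg]
  ring
end
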